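/- Suppose a group Γ acts effectively on a set, and there is a constant C such that any finite cyclic group acting effectively has at most C elements, and a constant d bounding the rank of any elementary abelian p-group acting effectively. Then every finite group G acting effectively satisfies |G| ≤ [C^d (C^d)!]^C. -/

import Mathlib

open Subgroup MulAction
open scoped IsMulCommutative

lemma stmt15_rank (p : ℕ) : ∀ (e : ℕ) (A : Type) (_ : CommGroup A) (_ : Finite A),
    (∀ a : A, a ^ p ^ e = 1) → Nat.card A ≤ Nat.card {a : A // a ^ p = 1} ^ e := by
  intro e
  induction e with
  | zero =>
    intro A _ _ h
    have : ∀ a : A, a = 1 := by simpa using h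
    have : Subsingleton A := ⟨fun a b => by rw [this a, this b]⟩
    simp [Nat.card_eq_one_iff_unique]
  | succ e ih =>
    intro A _ _ h
    set f : A →* A := powMonoidHom p with hf
    have hker : Nat.card f.ker = Nat.card {a : A // a ^ p = 1} := by
      apply Nat.card_congr
      exact Equiv.subtypeEquivRight (fun a => by simp [hf, MonoidHom.mem_ker, powMonoidHom_apply])
    have hrange : ∀ b : f.range, b ^ p ^ e = 1 := by
      rintro ⟨b, a, rfl⟩
      have : (a ^ p) ^ p ^ e = 1 := by
        rw [← pow_mul, ← pow_succ']
        exact h a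
      ext
      simpa [hf] using this
    have h1 := ih f.range inferInstance inferInstance hrange
    have hΩr : Nat.card {b : f.range // b ^ p = 1} ≤ Nat.card {a : A // a ^ p = 1} := by
      apply Nat.card_le_card_of_injective
        (fun b => (⟨b.1.1, by have := b.2; rw [Subtype.ext_iff] at this; simpa using this⟩ :
          {a : A // a ^ p = 1}))
      intro x y hxy
      simp only [Subtype.mk.injEq] at hxy
      exact Subtype.ext (Subtype.ext hxy)
    calc Nat.card A = Nat.card (A ⧸ f.ker) * Nat.card f.ker :=
          Subgroup.card_eq_card_quotient_mul_card_subgroup f.ker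
      _ = Nat.card f.range * Nat.card f.ker := by
          rw [Nat.card_congr (QuotientGroup.quotientKerEquivRange f).toEquiv]
      _ ≤ Nat.card {a : A // a ^ p = 1} ^ e * Nat.card {a : A // a ^ p = 1} := by
          rw [hker]
          exact Nat.mul_le_mul (h1.trans (Nat.pow_le_pow_left hΩr e)) le_rfl
      _ = Nat.card {a : A // a ^ p = 1} ^ (e + 1) := by ring

lemma stmt15_vs (p : ℕ) [Fact p.Prime] (V : Type) [AddCommGroup V] [Module (ZMod p) V]
    [Finite V] : ∃ m : ℕ, Nonempty (V ≃+ (Fin m → ZMod p)) ∧ Nat.card V = p ^ m := by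
  set m := Module.finrank (ZMod p) V with hm
  let b := Module.finBasis (ZMod p) V
  let e1 : V ≃+ (Fin m → ZMod p) := b.equivFun.toAddEquiv
  refine ⟨m, ⟨e1⟩, ?_⟩
  rw [Nat.card_congr e1.toEquiv]
  simp [Nat.card_eq_fintype_card, ZMod.card]

lemma stmt15_elem (p : ℕ) (hp : p.Prime) (Ω : Type) [CommGroup Ω] [Finite Ω]
    (h : ∀ x : Ω, x ^ p = 1) :
    ∃ m : ℕ, Nonempty (Ω ≃* Multiplicative (Fin m → ZMod p)) ∧ Nat.card Ω = p ^ m := by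
  haveI : NeZero p := ⟨hp.ne_zero⟩
  haveI : Fact p.Prime := ⟨hp⟩
  letI : Module (ZMod p) (Additive Ω) := AddCommGroup.zmodModule (by
    intro x
    simpa using congrArg Additive.ofMul (h x.toMul))
  obtain ⟨m, ⟨e1⟩, hcard⟩ := stmt15_vs p (Additive Ω)
  refine ⟨m, ⟨(MulEquiv.multiplicativeAdditive Ω).symm.trans e1.toMultiplicative⟩, ?_⟩
  rwa [Nat.card_congr (Additive.ofMul (α := Ω)).symm] at hcard

lemma stmt15_center (p : ℕ) [hp : Fact p.Prime] {Q : Type} [Group Q] [Finite Q]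
    (hQ : IsPGroup p Q) (N : Subgroup Q) [hNn : N.Normal] (hN : N ≠ ⊥) :
    ∃ z : Q, z ∈ N ∧ z ≠ 1 ∧ z ∈ Subgroup.center Q := by
  letI : MulAction Q ↥N := MulAction.compHom ↥N (MulAut.conjNormal (H := N))
  have hsmul : ∀ (g : Q) (x : ↥N), ((g • x : ↥N) : Q) = g * x * g⁻¹ := by
    intro g x
    exact MulAut.conjNormal_apply g x
  have hmod := hQ.card_modEq_card_fixedPoints ↥N
  have hdvdN : p ∣ Nat.card ↥N := by
    obtain ⟨k, hk⟩ := IsPGroup.iff_card.mp (hQ.to_subgroup N)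
    have h1 : 1 < Nat.card ↥N := N.one_lt_card_iff_ne_bot.mpr hN
    rcases Nat.eq_zero_or_pos k with rfl | hkpos
    · rw [pow_zero] at hk; omega
    · rw [hk]; exact dvd_pow_self p hkpos.ne'
  have hdvdF : p ∣ Nat.card (fixedPoints Q ↥N) :=
    (Nat.modEq_zero_iff_dvd.mpr hdvdN).symm.trans hmod |>.symm |> Nat.modEq_zero_iff_dvd.mp
  have h1fix : (1 : ↥N) ∈ fixedPoints Q ↥N := by
    intro g
    ext
    rw [hsmul]
    simp
  have hpos : 0 < Nat.card (fixedPoints Q ↥N) := Nat.card_pos_iff.mpr ⟨⟨⟨1, h1fix⟩⟩, inferInstance⟩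
  have h2 : 2 ≤ Nat.card (fixedPoints Q ↥N) :=
    le_trans hp.out.two_le (Nat.le_of_dvd hpos hdvdF)
  have : Nontrivial (fixedPoints Q ↥N) := Finite.one_lt_card_iff_nontrivial.mp (lt_of_lt_of_le one_lt_two h2)
  obtain ⟨⟨x, hxfix⟩, hxne⟩ := exists_ne (⟨(1 : ↥N), h1fix⟩ : fixedPoints Q ↥N)
  refine ⟨(x : Q), x.2, ?_, ?_⟩
  · intro hx1
    apply hxne
    ext
    exact hx1
  · rw [Subgroup.mem_center_iff]
    intro g
    have := hxfix g
    have hgx : g * (x : Q) * g⁻¹ = x := by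
      have h' := hsmul g x
      rw [mem_fixedPoints] at hxfix
      rw [hxfix g] at h'
      exact h'.symm
    calc g * (x : Q) = (g * x * g⁻¹) * g := by group
      _ = (x : Q) * g := by rw [hgx]

lemma stmt15_key (p C d : ℕ) (hp : p.Prime) {K : Type} [Group K] [Finite K]
    (hK : IsPGroup p K) (hC' : ∀ g : K, orderOf g ≤ C)
    (hd' : ∀ (m : ℕ) (S : Subgroup K),
      Nonempty (S ≃* Multiplicative (Fin m → ZMod p)) → m ≤ d) :
    Nat.card K ≤ C ^ d * (C ^ d).factorial := by
  haveI : Fact p.Prime := ⟨hp⟩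
  -- maximal abelian normal subgroup
  have hbot : (⊥ : Subgroup K) ∈ {B : Subgroup K | B.Normal ∧ IsMulCommutative B} :=
    ⟨inferInstance, ⟨⟨fun a b => Subsingleton.elim _ _⟩⟩⟩
  obtain ⟨A, hA, hmax⟩ := Set.Finite.exists_maximalFor id
    {B : Subgroup K | B.Normal ∧ IsMulCommutative B} (Set.toFinite _) ⟨⊥, hbot⟩
  simp only [id] at hmax
  haveI hAn : A.Normal := hA.1
  haveI hAc : IsMulCommutative A := hA.2
  -- the centralizer of A
  haveI hCzn : (centralizer (A : Set K)).Normal := by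
    constructor
    intro n hn g
    rw [mem_centralizer_iff] at hn ⊢
    intro h hh
    have h1 : g⁻¹ * h * g ∈ A := by
      simpa using hAn.conj_mem h hh g⁻¹
    have h2 := hn _ h1
    calc h * (g * n * g⁻¹) = g * ((g⁻¹ * h * g) * n) * g⁻¹ := by group
      _ = g * (n * (g⁻¹ * h * g)) * g⁻¹ := by rw [h2]
      _ = g * n * g⁻¹ * h := by group
  have hCzA : centralizer (A : Set K) = A := by
    refine le_antisymm ?_ (Subgroup.le_centralizer A)
    by_contra hns
    obtain ⟨x, hxCz, hxA⟩ := SetLike.not_le_iff_exists.mp hns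
    have hQ : IsPGroup p (K ⧸ A) := hK.to_quotient A
    set N : Subgroup (K ⧸ A) := (centralizer (A : Set K)).map (QuotientGroup.mk' A) with hN
    haveI : N.Normal := Subgroup.Normal.map hCzn _ (QuotientGroup.mk'_surjective A)
    have hNbot : N ≠ ⊥ := by
      intro hb
      have : (QuotientGroup.mk' A) x ∈ N := Subgroup.mem_map_of_mem _ hxCz
      rw [hb, Subgroup.mem_bot] at this
      exact hxA ((QuotientGroup.eq_one_iff x).mp this)
    obtain ⟨z, hzN, hz1, hzc⟩ := stmt15_center p hQ N hNbot
    obtain ⟨y, hyCz, hyz⟩ := Subgroup.mem_map.mp hzN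
    have hyA : y ∉ A := by
      intro hy
      exact hz1 (by rw [← hyz]; exact (QuotientGroup.eq_one_iff y).mpr hy)
    -- B = A ⊔ ⟨y⟩ is abelian and normal
    set s : Set K := (A : Set K) ∪ {y} with hs
    set B : Subgroup K := closure s with hB
    have hsc : s ⊆ ↑(centralizer s) := by
      intro w hw
      rw [SetLike.mem_coe, mem_centralizer_iff]
      intro h hh
      rcases hh with hh | hh
      · rcases hw with hw | hw
        · exact mul_comm_of_mem_isMulCommutative A hh hw
        · rw [Set.mem_singleton_iff] at hw
          subst hw
          exact (mem_centralizer_iff.mp hyCz) h hh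
      · rw [Set.mem_singleton_iff] at hh
        subst hh
        rcases hw with hw | hw
        · exact ((mem_centralizer_iff.mp hyCz) w hw).symm
        · rw [Set.mem_singleton_iff] at hw
          subst hw
          rfl
    have hBcomm : IsMulCommutative B := by
      rw [← Subgroup.le_centralizer_iff_isMulCommutative]
      calc B ≤ centralizer (centralizer s : Subgroup K) :=
            Subgroup.closure_le_centralizer_centralizer s
        _ ≤ centralizer B := Subgroup.centralizer_le
            (by rw [hB]; exact (Subgroup.closure_le _).mpr hsc)
    have hAB : A ≤ B := fun a ha => Subgroup.subset_closure (Or.inl ha)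
    have hyB : y ∈ B := Subgroup.subset_closure (Or.inr rfl)
    have hBcent : ∀ b ∈ B, (QuotientGroup.mk' A) b ∈ Subgroup.center (K ⧸ A) := by
      intro b hb
      rw [hB] at hb
      induction hb using closure_induction with
      | mem w hw =>
        rcases hw with hw | hw
        · rw [show (QuotientGroup.mk' A) w = 1 from (QuotientGroup.eq_one_iff w).mpr hw]
          exact Subgroup.one_mem _
        · rw [Set.mem_singleton_iff] at hw
          subst hw
          rw [hyz]
          exact hzc
      | one => rw [map_one]; exact Subgroup.one_mem _
      | mul u v hu hv hu' hv' => rw [map_mul]; exact Subgroup.mul_mem _ hu' hv'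
      | inv u hu hu' => rw [map_inv]; exact Subgroup.inv_mem _ hu'
    haveI hBnorm : B.Normal := by
      constructor
      intro b hb g
      have hcomm : g * b * g⁻¹ * b⁻¹ ∈ A := by
        rw [← QuotientGroup.eq_one_iff]
        show (QuotientGroup.mk' A) (g * b * g⁻¹ * b⁻¹) = 1
        have hc := (Subgroup.mem_center_iff.mp (hBcent b hb)) ((QuotientGroup.mk' A) g)
        rw [show (QuotientGroup.mk' A) (g * b * g⁻¹ * b⁻¹) =
            (QuotientGroup.mk' A) g * (QuotientGroup.mk' A) b * ((QuotientGroup.mk' A) g)⁻¹ *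
            ((QuotientGroup.mk' A) b)⁻¹ by simp [map_mul], hc]
        group
      have : g * b * g⁻¹ = (g * b * g⁻¹ * b⁻¹) * b := by group
      rw [this]
      exact Subgroup.mul_mem _ (hAB hcomm) hb
    have hABeq : A = B := le_antisymm hAB (hmax (j := B) ⟨hBnorm, hBcomm⟩ hAB)
    exact hyA (hABeq ▸ hyB)
  -- conjugation map into MulAut A
  set φ : K →* MulAut ↥A := MulAut.conjNormal with hφ
  have hker : φ.ker = centralizer (A : Set K) := by
    ext g
    rw [MonoidHom.mem_ker, mem_centralizer_iff]
    constructor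
    · intro hg h hh
      have h1 : ((φ g) (⟨h, hh⟩ : A) : K) = g * h * g⁻¹ := MulAut.conjNormal_apply g _
      rw [hg] at h1
      simp only [MulAut.one_apply] at h1
      calc h * g = (g * h * g⁻¹) * g := by rw [← h1]
        _ = g * h := by group
    · intro hg
      ext a
      have h1 : ((φ g) a : K) = g * a * g⁻¹ := MulAut.conjNormal_apply g _
      have h2 : g * (a : K) * g⁻¹ = a := by
        rw [← hg a a.2]
        group
      show ((φ g) a : K) = ((1 : MulAut ↥A) a : K)
      rw [h1, h2]
      rfl
  rw [hCzA] at hker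
  -- counting
  haveI : Finite (MulAut ↥A) :=
    Finite.of_injective (fun e => e.toEquiv) MulEquiv.toEquiv_injective
  have hcard1 : Nat.card K = Nat.card (K ⧸ φ.ker) * Nat.card φ.ker :=
    Subgroup.card_eq_card_quotient_mul_card_subgroup φ.ker
  have hcard2 : Nat.card (K ⧸ φ.ker) = Nat.card φ.range :=
    Nat.card_congr (QuotientGroup.quotientKerEquivRange φ).toEquiv
  have hcard3 : Nat.card φ.range ≤ Nat.card (MulAut ↥A) := Subgroup.card_le_card_group _
  have hcard4 : Nat.card (MulAut ↥A) ≤ (Nat.card ↥A).factorial := by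
    have h5 : Nat.card (MulAut ↥A) ≤ Nat.card (Equiv.Perm ↥A) :=
      Nat.card_le_card_of_injective _ MulEquiv.toEquiv_injective
    have h6 : Nat.card (Equiv.Perm ↥A) = (Nat.card ↥A).factorial := by
      haveI := Fintype.ofFinite ↥A
      haveI : DecidableEq ↥A := Classical.decEq _
      rw [Nat.card_eq_fintype_card, Nat.card_eq_fintype_card, Fintype.card_perm]
    rw [← h6]
    exact h5
  -- bound |A| ≤ C ^ d
  have hcardA : Nat.card ↥A ≤ C ^ d := by
    have hApg : IsPGroup p ↥A := hK.to_subgroup A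
    obtain ⟨n, hn⟩ := IsPGroup.iff_card.mp hApg
    haveI := Fintype.ofFinite ↥A
    have hexpdvd : Monoid.exponent ↥A ∣ p ^ n := by
      rw [← hn, Nat.card_eq_fintype_card]
      exact Group.exponent_dvd_card
    obtain ⟨e, he, hexp⟩ := (Nat.dvd_prime_pow hp).mp hexpdvd
    have hpow : ∀ a : ↥A, a ^ p ^ e = 1 := by
      intro a
      rw [← hexp]
      exact Monoid.pow_exponent_eq_one a
    have hpeC : p ^ e ≤ C := by
      obtain ⟨g, hg⟩ := Monoid.exists_orderOf_eq_exponent (Monoid.ExponentExists.of_finite (G := ↥A))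
      have : orderOf (g : K) = orderOf g := orderOf_injective A.subtype A.subtype_injective g
      rw [← hexp, ← hg, ← this]
      exact hC' _
    -- the p-torsion subgroup
    set Ω : Subgroup ↥A :=
      { carrier := {a : ↥A | a ^ p = 1}
        one_mem' := one_pow p
        mul_mem' := fun {a b} ha hb => by
          simp only [Set.mem_setOf_eq] at *
          rw [mul_pow, ha, hb, one_mul]
        inv_mem' := fun {a} ha => by
          simp only [Set.mem_setOf_eq] at *
          rw [inv_pow, ha, inv_one] } with hΩ
    have hΩall : ∀ x : ↥Ω, x ^ p = 1 := fun x => Subtype.ext x.2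
    obtain ⟨m, ⟨eΩ⟩, hΩcard⟩ := stmt15_elem p hp ↥Ω hΩall
    have hmd : m ≤ d := by
      refine hd' m (Ω.map A.subtype) ⟨?_⟩
      exact ((Subgroup.equivMapOfInjective Ω A.subtype A.subtype_injective).symm).trans eΩ
    have hrank := stmt15_rank p e ↥A inferInstance inferInstance hpow
    have hsub : Nat.card {a : ↥A // a ^ p = 1} = Nat.card ↥Ω := rfl
    calc Nat.card ↥A ≤ Nat.card {a : ↥A // a ^ p = 1} ^ e := hrank
      _ = (p ^ m) ^ e := by rw [hsub, hΩcard]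
      _ = (p ^ e) ^ m := by rw [← pow_mul, ← pow_mul, Nat.mul_comm]
      _ ≤ C ^ m := Nat.pow_le_pow_left hpeC m
      _ ≤ C ^ d := Nat.pow_le_pow_right (le_trans (by simpa using hC' 1) le_rfl) hmd
  calc Nat.card K = Nat.card (K ⧸ φ.ker) * Nat.card φ.ker := hcard1
    _ = Nat.card φ.range * Nat.card ↥A := by rw [hcard2, hker]
    _ ≤ (Nat.card ↥A).factorial * Nat.card ↥A := by
        exact Nat.mul_le_mul (le_trans hcard3 hcard4) le_rfl
    _ = Nat.card ↥A * (Nat.card ↥A).factorial := Nat.mul_comm _ _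
    _ ≤ C ^ d * (C ^ d).factorial :=
        Nat.mul_le_mul hcardA (Nat.factorial_le hcardA)

theorem stmt15 (X : Type) (C d : ℕ)
    (hC : ∀ H : Subgroup (Equiv.Perm X), Finite H → IsCyclic H → Nat.card H ≤ C)
    (hd : ∀ (p m : ℕ), p.Prime → ∀ H : Subgroup (Equiv.Perm X),
      Nonempty (H ≃* Multiplicative (Fin m → ZMod p)) → m ≤ d)
    (G : Subgroup (Equiv.Perm X)) (hG : Finite G) :
    Nat.card G ≤ (C ^ d * Nat.factorial (C ^ d)) ^ C := by
  haveI := hG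
  -- order of any finite-order permutation is at most C
  have horder : ∀ g : Equiv.Perm X, IsOfFinOrder g → orderOf g ≤ C := by
    intro g hg
    have hfin : Finite ↥(Subgroup.zpowers g) := hg.finite_zpowers
    have hcyc : IsCyclic ↥(Subgroup.zpowers g) := by
      refine ⟨⟨⟨g, Subgroup.mem_zpowers g⟩, fun x => ?_⟩⟩
      obtain ⟨k, hk⟩ := x.2
      exact ⟨k, Subtype.ext (by rw [← hk]; rfl)⟩
    rw [← Nat.card_zpowers g]
    exact hC _ hfin hcyc
  have horderG : ∀ (H : Subgroup (Equiv.Perm X)) (_ : Finite ↥H) (g : ↥H),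
      orderOf g ≤ C := by
    intro H hH g
    have h1 : orderOf (g : Equiv.Perm X) = orderOf g := orderOf_injective H.subtype H.subtype_injective g
    rw [← h1]
    apply horder
    rw [← orderOf_pos_iff, h1]
    exact orderOf_pos g
  have hC1 : 1 ≤ C := by
    have h := hC ⊥ inferInstance inferInstance
    simpa using h
  set n := Nat.card ↥G with hn
  have hn0 : n ≠ 0 := Nat.card_pos.ne'
  set B := C ^ d * Nat.factorial (C ^ d) with hB
  have hB1 : 1 ≤ B := Nat.mul_le_mul (Nat.one_le_pow d C hC1) (Nat.factorial_pos _) |>.trans' (by norm_num)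
  have hpC : ∀ q ∈ n.primeFactors, q ≤ C := by
    intro q hq
    haveI : Fact q.Prime := ⟨Nat.prime_of_mem_primeFactors hq⟩
    obtain ⟨g, hg⟩ := exists_prime_orderOf_dvd_card' (G := ↥G) q
      (Nat.dvd_of_mem_primeFactors hq)
    rw [← hg]
    exact horderG G hG g
  have hfac : ∀ q ∈ n.primeFactors, q ^ n.factorization q ≤ B := by
    intro q hq
    have hqp : q.Prime := Nat.prime_of_mem_primeFactors hq
    haveI : Fact q.Prime := ⟨hqp⟩
    obtain ⟨P⟩ : Nonempty (Sylow q ↥G) := inferInstance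
    have hPcard : Nat.card ↥(P : Subgroup ↥G) = q ^ n.factorization q :=
      Sylow.card_eq_multiplicity P
    set HP : Subgroup (Equiv.Perm X) := (P : Subgroup ↥G).map G.subtype with hHP
    have eqv := Subgroup.equivMapOfInjective (P : Subgroup ↥G) G.subtype G.subtype_injective
    haveI : Finite ↥HP := Finite.of_equiv _ eqv.toEquiv
    have hHPcard : Nat.card ↥HP = q ^ n.factorization q := by
      rw [← hPcard]
      exact (Nat.card_congr eqv.toEquiv).symm
    have hpg : IsPGroup q ↥HP := P.isPGroup'.map G.subtype
    have hkey := stmt15_key q C d hqp hpg (horderG HP inferInstance)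
      (fun m S ⟨eS⟩ => hd q m hqp (S.map HP.subtype)
        ⟨((Subgroup.equivMapOfInjective S HP.subtype HP.subtype_injective).symm).trans eS⟩)
    rw [← hHPcard, hB]
    exact hkey
  have hsub : n.primeFactors ⊆ Finset.Icc 2 C := by
    intro q hq
    rw [Finset.mem_Icc]
    exact ⟨(Nat.prime_of_mem_primeFactors hq).two_le, hpC q hq⟩
  have hcardPF : n.primeFactors.card ≤ C := by
    calc n.primeFactors.card ≤ (Finset.Icc 2 C).card := Finset.card_le_card hsub
      _ = C + 1 - 2 := Nat.card_Icc 2 C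
      _ ≤ C := by omega
  calc Nat.card ↥G = ∏ q ∈ n.primeFactors, q ^ n.factorization q := by
        conv_lhs => rw [← hn, ← Nat.factorization_prod_pow_eq_self hn0]
        rfl
    _ ≤ ∏ _q ∈ n.primeFactors, B := Finset.prod_le_prod' hfac
    _ = B ^ n.primeFactors.card := Finset.prod_const B
    _ ≤ B ^ C := Nat.pow_le_pow_right hB1 hcardPF
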